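/- Let n ≥ 1, let u be a smooth strictly convex function on a domain Ω ⊆ ℝⁿ, let C > 0, and let T(ξ) = Aξ + b be an invertible affine transformation of ℝⁿ. Define ũ on T(Ω) by ũ(Tξ) = u(ξ)/C. Then ũ is smooth and strictly convex and Φ_{ũ}(Tξ) = C · Φ_u(ξ) for all ξ ∈ Ω, where for a strictly convex function w one sets ρ_w = (det D²w)^{1/(n+2)} and Φ_w = (1/ρ_w²) Σ_{i,j} w^{ij}(∂ρ_w/∂ξ_i)(∂ρ_w/∂ξ_j), with (w^{ij}) the inverse of the Hessian D²w. -/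

import Mathlib

noncomputable section
open Matrix

/-- The `i`-th partial derivative of a function on `ℝⁿ`. -/
def pd {n : ℕ} (i : Fin n) (f : (Fin n → ℝ) → ℝ) : (Fin n → ℝ) → ℝ :=
  fun x => fderiv ℝ f x (Pi.single i 1)

/-- The Hessian matrix `(∂²f/∂x_i∂x_j)`. -/
def hess {n : ℕ} (f : (Fin n → ℝ) → ℝ) (x : Fin n → ℝ) : Matrix (Fin n) (Fin n) ℝ :=
  Matrix.of fun i j => pd i (pd j f) x

/-- `ρ_w = (det D²w)^{1/(n+2)}`. -/
def rhoU {n : ℕ} (w : (Fin n → ℝ) → ℝ) (x : Fin n → ℝ) : ℝ :=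
  (hess w x).det ^ ((1 : ℝ) / (n + 2))

/-- `Φ_w = (1/ρ_w²) Σ w^{ij} (∂ρ_w/∂ξ_i)(∂ρ_w/∂ξ_j)`. -/
def PhiU {n : ℕ} (w : (Fin n → ℝ) → ℝ) (x : Fin n → ℝ) : ℝ :=
  (1 / (rhoU w x) ^ 2) *
    ∑ i : Fin n, ∑ j : Fin n, (hess w x)⁻¹ i j * pd i (rhoU w) x * pd j (rhoU w) x

section Aux
variable {n : ℕ}

lemma clm_apply_eq_sum (φ : (Fin n → ℝ) →L[ℝ] ℝ) (w : Fin n → ℝ) :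
    φ w = ∑ l, w l * φ (Pi.single l 1) := by
  conv_lhs => rw [← Finset.univ_sum_single w]
  rw [map_sum]
  refine Finset.sum_congr rfl fun l _ => ?_
  have h : (Pi.single l (w l) : Fin n → ℝ) = w l • (Pi.single l 1 : Fin n → ℝ) := by
    rw [← Pi.single_smul]; simp
  rw [h, _root_.map_smul, smul_eq_mul]

lemma hasFDerivAt_affine (M : Matrix (Fin n) (Fin n) ℝ) (c y : Fin n → ℝ) :
    HasFDerivAt (fun z : Fin n → ℝ => M.mulVec z + c)
      (LinearMap.toContinuousLinearMap (Matrix.mulVecLin M)) y := by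
  simpa using ((LinearMap.toContinuousLinearMap (Matrix.mulVecLin M)).hasFDerivAt (x := y)).add_const c

lemma pd_comp_affine (M : Matrix (Fin n) (Fin n) ℝ) (c : Fin n → ℝ)
    (f : (Fin n → ℝ) → ℝ) (y : Fin n → ℝ)
    (hf : DifferentiableAt ℝ f (M.mulVec y + c)) (i : Fin n) :
    pd i (fun z => f (M.mulVec z + c)) y
      = ∑ l, M l i * pd l f (M.mulVec y + c) := by
  have hS := hasFDerivAt_affine M c y
  have hcomp := hf.hasFDerivAt.comp y hS
  have hd := hcomp.fderiv
  unfold pd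
  rw [show (fun z => f (M.mulVec z + c)) = f ∘ (fun z : Fin n → ℝ => M.mulVec z + c) from rfl, hd]
  rw [ContinuousLinearMap.comp_apply]
  rw [show (LinearMap.toContinuousLinearMap (Matrix.mulVecLin M)) (Pi.single i 1)
      = M.mulVec (Pi.single i 1) from by simp]
  rw [clm_apply_eq_sum]
  simp

lemma pd_congr {U : Set (Fin n → ℝ)} (hU : IsOpen U) {f g : (Fin n → ℝ) → ℝ}
    (h : ∀ x ∈ U, f x = g x) {x : Fin n → ℝ} (hx : x ∈ U) (i : Fin n) :
    pd i f x = pd i g x := by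
  have hev : f =ᶠ[nhds x] g := Filter.eventuallyEq_of_mem (hU.mem_nhds hx) h
  unfold pd; rw [hev.fderiv_eq]

lemma pd_const_mul (c : ℝ) {f : (Fin n → ℝ) → ℝ} {x : Fin n → ℝ}
    (hf : DifferentiableAt ℝ f x) (i : Fin n) :
    pd i (fun z => c * f z) x = c * pd i f x := by
  unfold pd; rw [fderiv_const_mul hf]; simp

lemma pd_sum_mul (c : Fin n → ℝ) (f : Fin n → (Fin n → ℝ) → ℝ)
    (x : Fin n → ℝ) (hf : ∀ k, DifferentiableAt ℝ (f k) x) (l : Fin n) :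
    pd l (fun z => ∑ k, c k * f k z) x = ∑ k, c k * pd l (f k) x := by
  unfold pd
  rw [fderiv_fun_sum (fun k _ => (hf k).const_mul (c k))]
  rw [ContinuousLinearMap.sum_apply]
  refine Finset.sum_congr rfl fun k _ => ?_
  rw [fderiv_const_mul (hf k)]
  simp

lemma quad_dot (N : Matrix (Fin n) (Fin n) ℝ) (w : Fin n → ℝ) :
    ∑ i, ∑ j, N i j * w i * w j = w ⬝ᵥ (N *ᵥ w) := by
  simp only [dotProduct, Matrix.mulVec, Finset.mul_sum]
  exact Finset.sum_congr rfl fun i _ => Finset.sum_congr rfl fun j _ => by ring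

lemma quad_conj (Aa B M : Matrix (Fin n) (Fin n) ℝ) (hBA : B * Aa = 1) (p : Fin n → ℝ) :
    ∑ i, ∑ j, (Aa * M * Aaᵀ) i j * (Bᵀ *ᵥ p) i * (Bᵀ *ᵥ p) j
      = ∑ i, ∑ j, M i j * p i * p j := by
  rw [quad_dot, quad_dot]
  rw [Matrix.mulVec_transpose, Matrix.dotProduct_mulVec, Matrix.vecMul_vecMul,
    Matrix.dotProduct_mulVec]
  have h1 : B * (Aa * M * Aaᵀ) = M * Aaᵀ := by
    rw [← Matrix.mul_assoc, ← Matrix.mul_assoc, hBA, Matrix.one_mul]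
  rw [h1, ← Matrix.vecMul_vecMul, Matrix.vecMul_transpose, dotProduct_comm,
    Matrix.dotProduct_mulVec, Matrix.vecMul_vecMul, hBA, Matrix.vecMul_one,
    dotProduct_comm]

end Aux

/-- Rescaling behaviour of `Φ` under invertible affine transformations:
if `ũ(Tξ) = u(ξ)/C` on `T(Ω)`, then `ũ` is smooth strictly convex and
`Φ_{ũ}(Tξ) = C·Φ_u(ξ)` on `Ω`. -/
theorem Phi_affine_rescaling (n : ℕ) (hn : 1 ≤ n)
    (Ω : Set (Fin n → ℝ)) (hΩo : IsOpen Ω)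
    (u : (Fin n → ℝ) → ℝ) (hu : ContDiffOn ℝ (⊤ : ℕ∞) u Ω)
    (hconv : ∀ ξ ∈ Ω, (hess u ξ).PosDef)
    (C : ℝ) (hC : 0 < C)
    (A : Matrix (Fin n) (Fin n) ℝ) (hA : IsUnit A.det) (b : Fin n → ℝ)
    (T : (Fin n → ℝ) → (Fin n → ℝ)) (hT : ∀ ξ, T ξ = A.mulVec ξ + b)
    (ut : (Fin n → ℝ) → ℝ) (hut : ∀ ξ ∈ Ω, ut (T ξ) = u ξ / C) :
    ContDiffOn ℝ (⊤ : ℕ∞) ut (T '' Ω) ∧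
      (∀ y ∈ T '' Ω, (hess ut y).PosDef) ∧
      ∀ ξ ∈ Ω, PhiU ut (T ξ) = C * PhiU u ξ := by
  classical
  set B : Matrix (Fin n) (Fin n) ℝ := A⁻¹ with hBdef
  have hBA : B * A = 1 := Matrix.nonsing_inv_mul A hA
  have hAB : A * B = 1 := Matrix.mul_nonsing_inv A hA
  have hBdet : IsUnit B.det := Matrix.isUnit_nonsing_inv_det A hA
  set S : (Fin n → ℝ) → (Fin n → ℝ) := fun y => B.mulVec y + (-(B.mulVec b)) with hSdef
  have hST : ∀ ξ, S (T ξ) = ξ := by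
    intro ξ
    have h1 : B.mulVec (A.mulVec ξ + b) = ξ + B.mulVec b := by
      rw [Matrix.mulVec_add, Matrix.mulVec_mulVec, hBA, Matrix.one_mulVec]
    simp [hSdef, hT, h1]
  have hTS : ∀ y, T (S y) = y := by
    intro y
    have h1 : A.mulVec (B.mulVec y + (-(B.mulVec b))) = y - b := by
      rw [Matrix.mulVec_add, Matrix.mulVec_neg, Matrix.mulVec_mulVec, Matrix.mulVec_mulVec,
        hAB, Matrix.one_mulVec, Matrix.one_mulVec]
      abel
    simp [hT, hSdef, h1]
  have himg : T '' Ω = S ⁻¹' Ω := by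
    ext y
    constructor
    · rintro ⟨ξ, hξ, rfl⟩; simpa [hST ξ] using hξ
    · intro hy; exact ⟨S y, hy, hTS y⟩
  have hSc : Continuous S := by
    exact ((Matrix.mulVecLin B).continuous_of_finiteDimensional).add continuous_const
  have hScd : ContDiff ℝ (⊤ : ℕ∞) S := by
    exact ((Matrix.mulVecLin B).toContinuousLinearMap.contDiff).add contDiff_const
  have hTopen : IsOpen (T '' Ω) := himg ▸ (hΩo.preimage hSc)
  have hmaps : Set.MapsTo S (T '' Ω) Ω := by
    intro y hy; rw [himg] at hy; exact hy
  -- the comparison function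
  have hveq : ∀ y ∈ T '' Ω, ut y = u (S y) / C := by
    rintro y ⟨ξ, hξ, rfl⟩
    rw [hut ξ hξ, hST ξ]
  -- smoothness
  have hsmooth : ContDiffOn ℝ (⊤ : ℕ∞) ut (T '' Ω) := by
    have hv : ContDiffOn ℝ (⊤ : ℕ∞) (fun y => u (S y) / C) (T '' Ω) :=
      (hu.comp hScd.contDiffOn hmaps).div_const C
    exact hv.congr hveq
  -- differentiability facts for u and its derivatives
  have hdiffu : ∀ x ∈ Ω, DifferentiableAt ℝ u x := fun x hx =>
    (hu.contDiffAt (hΩo.mem_nhds hx)).differentiableAt (by simp)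
  have hpd1u : ∀ k, ContDiffOn ℝ (⊤ : ℕ∞) (pd k u) Ω := by
    intro k
    have h1 : ContDiffOn ℝ (⊤ : ℕ∞) (fderiv ℝ u) Ω := hu.fderiv_of_isOpen hΩo (by exact_mod_cast le_top)
    exact (ContinuousLinearMap.apply ℝ ℝ (Pi.single k 1 : Fin n → ℝ)).contDiff.comp_contDiffOn h1
  have hpd2u : ∀ m k, ContDiffOn ℝ (⊤ : ℕ∞) (pd m (pd k u)) Ω := by
    intro m k
    have h1 : ContDiffOn ℝ (⊤ : ℕ∞) (fderiv ℝ (pd k u)) Ω :=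
      (hpd1u k).fderiv_of_isOpen hΩo (by exact_mod_cast le_top)
    exact (ContinuousLinearMap.apply ℝ ℝ (Pi.single m 1 : Fin n → ℝ)).contDiff.comp_contDiffOn h1
  have hdiffpd1 : ∀ k, ∀ x ∈ Ω, DifferentiableAt ℝ (pd k u) x := fun k x hx =>
    ((hpd1u k).contDiffAt (hΩo.mem_nhds hx)).differentiableAt (by simp)
  have hdetpos : ∀ x ∈ Ω, 0 < (hess u x).det := fun x hx => (hconv x hx).det_pos
  have hdet : ∀ x ∈ Ω, DifferentiableAt ℝ (fun z => (hess u z).det) x := by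
    intro x hx
    have hrw : (fun z => (hess u z).det)
        = fun z => ∑ σ : Equiv.Perm (Fin n),
            ((Equiv.Perm.sign σ : ℤ) : ℝ) * ∏ i, hess u z (σ i) i := by
      funext z
      rw [Matrix.det_apply]
      refine Finset.sum_congr rfl fun σ _ => ?_
      rw [Units.smul_def, zsmul_eq_mul]
    rw [hrw]
    refine DifferentiableAt.fun_sum fun σ _ => DifferentiableAt.const_mul ?_ _
    refine (HasFDerivAt.finset_prod (u := Finset.univ)
      (g := fun i z => hess u z (σ i) i) (fun i _ => DifferentiableAt.hasFDerivAt ?_)).differentiableAt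
    exact ((hpd2u (σ i) i).contDiffAt (hΩo.mem_nhds hx)).differentiableAt (by simp)
  have hrho_diff : ∀ x ∈ Ω, DifferentiableAt ℝ (rhoU u) x := by
    intro x hx
    have : DifferentiableAt ℝ (fun z => (hess u z).det ^ ((1 : ℝ) / (n + 2))) x :=
      (hdet x hx).rpow_const (Or.inl (hdetpos x hx).ne')
    exact this
  -- first partial derivatives of ut on T '' Ω
  have hSform : ∀ y, S y = B.mulVec y + (-(B.mulVec b)) := fun y => rfl
  have hpdut : ∀ y ∈ T '' Ω, ∀ j,
      pd j ut y = C⁻¹ * ∑ l, B l j * pd l u (S y) := by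
    intro y hy j
    have hx : S y ∈ Ω := hmaps hy
    have hdc : DifferentiableAt ℝ (fun z => u (S z)) y := by
      have := (hdiffu _ hx).hasFDerivAt.comp y (hasFDerivAt_affine B (-(B.mulVec b)) y)
      exact this.differentiableAt
    calc pd j ut y = pd j (fun z => C⁻¹ * u (S z)) y := by
          refine pd_congr hTopen (fun z hz => ?_) hy j
          rw [hveq z hz, div_eq_inv_mul]
      _ = C⁻¹ * pd j (fun z => u (S z)) y := pd_const_mul _ hdc j
      _ = C⁻¹ * ∑ l, B l j * pd l u (S y) := by
          rw [pd_comp_affine B (-(B.mulVec b)) u y (hdiffu _ hx) j]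
  -- the Hessian of ut
  have hhess : ∀ y ∈ T '' Ω, hess ut y = C⁻¹ • (Bᵀ * hess u (S y) * B) := by
    intro y hy
    have hx : S y ∈ Ω := hmaps hy
    ext i j
    have hg : pd i (pd j ut) y
        = pd i (fun z => C⁻¹ * ∑ l, B l j * pd l u (S z)) y := by
      refine pd_congr hTopen (fun z hz => ?_) hy i
      exact hpdut z hz j
    have hF : DifferentiableAt ℝ (fun x => ∑ l, B l j * pd l u x) (S y) :=
      DifferentiableAt.fun_sum fun l _ => (hdiffpd1 l _ hx).const_mul _
    have hdc : DifferentiableAt ℝ (fun z => ∑ l, B l j * pd l u (S z)) y := by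
      have := hF.hasFDerivAt.comp y (hasFDerivAt_affine B (-(B.mulVec b)) y)
      exact this.differentiableAt
    have hstep : pd i (pd j ut) y
        = C⁻¹ * ∑ m, B m i * ∑ l, B l j * pd m (pd l u) (S y) := by
      rw [hg, pd_const_mul _ hdc i,
        pd_comp_affine B (-(B.mulVec b)) (fun x => ∑ l, B l j * pd l u x) y hF i]
      congr 1
      refine Finset.sum_congr rfl fun m _ => ?_
      rw [pd_sum_mul (fun l => B l j) (fun l => pd l u) (S y) (fun l => hdiffpd1 l _ hx) m]
    show pd i (pd j ut) y = (C⁻¹ • (Bᵀ * hess u (S y) * B)) i j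
    have hR : (C⁻¹ • (Bᵀ * hess u (S y) * B)) i j
        = C⁻¹ * ∑ l, ∑ m, B m i * pd m (pd l u) (S y) * B l j := by
      simp only [Matrix.smul_apply, smul_eq_mul, Matrix.mul_apply, Matrix.transpose_apply,
        Finset.sum_mul]
      rfl
    rw [hstep, hR]
    congr 1
    rw [Finset.sum_comm]
    refine Finset.sum_congr rfl fun m _ => ?_
    rw [Finset.mul_sum]
    refine Finset.sum_congr rfl fun l _ => ?_
    ring
  -- positive definiteness
  have hmulvec_ne : ∀ x0 : Fin n → ℝ, x0 ≠ 0 → B.mulVec x0 ≠ 0 := by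
    intro x0 hx0 h
    apply hx0
    have : A.mulVec (B.mulVec x0) = x0 := by
      rw [Matrix.mulVec_mulVec, hAB, Matrix.one_mulVec]
    rw [h, Matrix.mulVec_zero] at this
    exact this.symm
  have hPD : ∀ y ∈ T '' Ω, (hess ut y).PosDef := by
    intro y hy
    have hx : S y ∈ Ω := hmaps hy
    have hH := hconv _ hx
    rw [hhess y hy]
    refine Matrix.PosDef.of_dotProduct_mulVec_pos ?_ ?_
    · have hsym : (hess u (S y))ᵀ = hess u (S y) := by
        have := hH.1
        rwa [Matrix.IsHermitian, Matrix.conjTranspose_eq_transpose_of_trivial] at this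
      rw [Matrix.IsHermitian, Matrix.conjTranspose_eq_transpose_of_trivial]
      rw [Matrix.transpose_smul, Matrix.transpose_mul, Matrix.transpose_mul,
        Matrix.transpose_transpose, hsym, Matrix.mul_assoc]
    · intro x0 hx0
      have hBx0 : B.mulVec x0 ≠ 0 := hmulvec_ne x0 hx0
      have hpos := hH.dotProduct_mulVec_pos hBx0
      rw [star_trivial] at hpos ⊢
      have hrw : x0 ⬝ᵥ ((C⁻¹ • (Bᵀ * hess u (S y) * B)) *ᵥ x0)
          = C⁻¹ * ((B *ᵥ x0) ⬝ᵥ (hess u (S y) *ᵥ (B *ᵥ x0))) := by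
        rw [Matrix.smul_mulVec, dotProduct_smul, smul_eq_mul]
        congr 1
        rw [← Matrix.mulVec_mulVec, ← Matrix.mulVec_mulVec, Matrix.dotProduct_mulVec,
          Matrix.vecMul_transpose]
      rw [hrw]
      exact mul_pos (inv_pos.mpr hC) hpos
  refine ⟨hsmooth, hPD, ?_⟩
  -- the scaling factor for rho
  set κ : ℝ := (C⁻¹ ^ n * B.det ^ 2) ^ ((1 : ℝ) / (n + 2)) with hκdef
  have hbasepos : 0 < C⁻¹ ^ n * B.det ^ 2 := by
    have h1 : (0:ℝ) < C⁻¹ ^ n := pow_pos (inv_pos.mpr hC) n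
    have h2 : (0:ℝ) < B.det ^ 2 := by
      have : B.det ≠ 0 := hBdet.ne_zero
      positivity
    exact mul_pos h1 h2
  have hκpos : 0 < κ := Real.rpow_pos_of_pos hbasepos _
  have hrho : ∀ y ∈ T '' Ω, rhoU ut y = κ * rhoU u (S y) := by
    intro y hy
    have hx : S y ∈ Ω := hmaps hy
    have hdet1 : (hess ut y).det = (C⁻¹ ^ n * B.det ^ 2) * (hess u (S y)).det := by
      rw [hhess y hy, Matrix.det_smul, Matrix.det_mul, Matrix.det_mul, Matrix.det_transpose]
      simp only [Fintype.card_fin, smul_eq_mul]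
      ring
    rw [rhoU, hdet1, Real.mul_rpow hbasepos.le (hdetpos _ hx).le]
    rfl
  -- derivatives of rho ut
  have hpdrho : ∀ y ∈ T '' Ω, ∀ i,
      pd i (rhoU ut) y = κ * ∑ l, B l i * pd l (rhoU u) (S y) := by
    intro y hy i
    have hx : S y ∈ Ω := hmaps hy
    have hdc : DifferentiableAt ℝ (fun z => rhoU u (S z)) y := by
      have := (hrho_diff _ hx).hasFDerivAt.comp y (hasFDerivAt_affine B (-(B.mulVec b)) y)
      exact this.differentiableAt
    calc pd i (rhoU ut) y = pd i (fun z => κ * rhoU u (S z)) y := by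
          refine pd_congr hTopen (fun z hz => ?_) hy i
          exact hrho z hz
      _ = κ * pd i (fun z => rhoU u (S z)) y := pd_const_mul _ hdc i
      _ = κ * ∑ l, B l i * pd l (rhoU u) (S y) := by
          rw [pd_comp_affine B (-(B.mulVec b)) (rhoU u) y (hrho_diff _ hx) i]
  -- final computation
  intro ξ hξ
  have hy : T ξ ∈ T '' Ω := ⟨ξ, hξ, rfl⟩
  have hx : S (T ξ) = ξ := hST ξ
  set H : Matrix (Fin n) (Fin n) ℝ := hess u ξ with hHdef
  have hHdetunit : IsUnit H.det := (isUnit_iff_ne_zero).mpr (hdetpos ξ hξ).ne'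
  have hinv : (hess ut (T ξ))⁻¹ = C • (A * H⁻¹ * Aᵀ) := by
    apply Matrix.inv_eq_right_inv
    rw [hhess _ hy, hx]
    rw [Matrix.smul_mul, Matrix.mul_smul, smul_smul, inv_mul_cancel₀ hC.ne']
    rw [one_smul]
    calc Bᵀ * H * B * (A * H⁻¹ * Aᵀ)
        = Bᵀ * H * ((B * A) * (H⁻¹ * Aᵀ)) := by
          simp only [Matrix.mul_assoc]
      _ = Bᵀ * (H * H⁻¹) * Aᵀ := by rw [hBA, Matrix.one_mul]; simp only [Matrix.mul_assoc]
      _ = Bᵀ * Aᵀ := by rw [Matrix.mul_nonsing_inv _ hHdetunit, Matrix.mul_one]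
      _ = (A * B)ᵀ := (Matrix.transpose_mul A B).symm
      _ = 1 := by rw [hAB, Matrix.transpose_one]
  set p : Fin n → ℝ := fun l => pd l (rhoU u) ξ with hpdef
  have hq : ∀ i, pd i (rhoU ut) (T ξ) = κ * (Bᵀ *ᵥ p) i := by
    intro i
    rw [hpdrho _ hy i, hx]
    congr 1
  have hρpos : 0 < rhoU u ξ := Real.rpow_pos_of_pos (hdetpos ξ hξ) _
  have hrhoy : rhoU ut (T ξ) = κ * rhoU u ξ := by rw [hrho _ hy, hx]
  rw [PhiU, PhiU, hrhoy, hinv]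
  have hsum : ∑ i, ∑ j, (C • (A * H⁻¹ * Aᵀ)) i j * pd i (rhoU ut) (T ξ) * pd j (rhoU ut) (T ξ)
      = C * κ ^ 2 * ∑ i, ∑ j, (A * H⁻¹ * Aᵀ) i j * (Bᵀ *ᵥ p) i * (Bᵀ *ᵥ p) j := by
    simp only [Finset.mul_sum]
    refine Finset.sum_congr rfl fun i _ => Finset.sum_congr rfl fun j _ => ?_
    rw [hq i, hq j]
    simp only [Matrix.smul_apply, smul_eq_mul]
    ring
  rw [hsum, quad_conj A B H⁻¹ hBA p]
  have : ∑ i, ∑ j, H⁻¹ i j * p i * p j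
      = ∑ i, ∑ j, (hess u ξ)⁻¹ i j * pd i (rhoU u) ξ * pd j (rhoU u) ξ := rfl
  rw [this]
  field_simp
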